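/- (Recursive feasibility, worst case) Consider follower dynamics ṗ̂ = v̂, v̇ = a_i, v̇_{i−1} = a_{i−1}, v̂ = v − v_{i−1}. Suppose at time t₀ the constraints v_min ≤ v ≤ v_max and g(p̂, v̂, v) ≤ 0 hold, where g = p̂ + δ + v̂·(v_min − v)/a_min + v̂²/(2a_min) for v̂ > 0 and g = p̂ + δ for v̂ ≤ 0. If the leader applies a_{i−1}(t) = a_min until v_{i−1} = v_min and then a_{i−1} = 0, then the follower strategy of applying a_i = a_min until v = v_min and a_i = 0 thereafter keeps g(t) ≤ 0 for all t ≥ t₀. -/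

import Mathlib

open intervalIntegral


lemma hasDerivAt_maxsq (w : ℝ) :
    HasDerivAt (fun x : ℝ => (max x 0) ^ 2) (2 * max w 0) w := by
  rcases lt_trichotomy w 0 with hw | hw | hw
  · have h0 : HasDerivAt (fun _ : ℝ => (0:ℝ)) 0 w := hasDerivAt_const w 0
    have hev : (fun _ : ℝ => (0:ℝ)) =ᶠ[nhds w] (fun x : ℝ => (max x 0) ^ 2) := by
      filter_upwards [eventually_lt_nhds hw] with x hx
      rw [max_eq_right hx.le]; norm_num
    have := h0.congr_of_eventuallyEq hev.symm
    simpa [max_eq_right hw.le] using this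
  · subst hw
    rw [hasDerivAt_iff_tendsto_slope]
    have hb : ∀ z : ℝ, ‖slope (fun x : ℝ => (max x 0) ^ 2) 0 z‖ ≤ |z| := by
      intro z
      rcases eq_or_ne z 0 with rfl | hz
      · simp [slope]
      · rw [slope_def_field]
        simp only [max_self, ne_eq]
        rw [Real.norm_eq_abs, abs_div, sub_zero]
        rw [div_le_iff₀ (abs_pos.2 hz)]
        have h1 : |(max z 0) ^ 2 - 0 ^ 2| ≤ z ^ 2 := by
          rcases le_total z 0 with h | h
          · rw [max_eq_right h]; simp [sq_nonneg]
          · rw [max_eq_left h]; simp [sq_nonneg]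
        calc |(max z 0) ^ 2 - 0 ^ 2| ≤ z ^ 2 := h1
          _ = |z| * |z| := by rw [← abs_mul, abs_of_nonneg (mul_self_nonneg z), sq]
    have hzero : Filter.Tendsto (fun z : ℝ => |z|) (nhdsWithin 0 {(0:ℝ)}ᶜ) (nhds 0) := by
      have : Filter.Tendsto (fun z : ℝ => |z|) (nhds 0) (nhds 0) := by
        simpa using continuous_abs.tendsto (0:ℝ)
      exact this.mono_left nhdsWithin_le_nhds
    have := squeeze_zero_norm hb hzero
    simpa using this
  · have h0 : HasDerivAt (fun x : ℝ => x ^ 2) (2 * w) w := by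
      simpa using hasDerivAt_pow 2 w
    have hev : (fun x : ℝ => x ^ 2) =ᶠ[nhds w] (fun x : ℝ => (max x 0) ^ 2) := by
      filter_upwards [eventually_gt_nhds hw] with x hx
      rw [max_eq_left hx.le]
    have := h0.congr_of_eventuallyEq hev.symm
    simpa [max_eq_left hw.le] using this

lemma integral_max_linear (c amin t0 t : ℝ) (hamin : amin ≠ 0) :
    ∫ s in t0..t, max (c + amin * (s - t0)) 0 =
      ((max (c + amin * (t - t0)) 0) ^ 2 - (max c 0) ^ 2) / (2 * amin) := by
  have hF : ∀ s : ℝ, HasDerivAt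
      (fun s => (max (c + amin * (s - t0)) 0) ^ 2 / (2 * amin))
      (max (c + amin * (s - t0)) 0) s := by
    intro s
    have h1 : HasDerivAt (fun s : ℝ => c + amin * (s - t0)) amin s := by
      simpa using (((hasDerivAt_id s).sub_const t0).const_mul amin).const_add c
    have h2 := (hasDerivAt_maxsq (c + amin * (s - t0))).comp s h1
    have h3 := h2.div_const (2 * amin)
    refine h3.congr_deriv ?_
    field_simp
  have hcont : Continuous fun s : ℝ => max (c + amin * (s - t0)) 0 :=
    (continuous_const.add (continuous_const.mul (continuous_id.sub continuous_const))).max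
      continuous_const
  have := intervalIntegral.integral_eq_sub_of_hasDerivAt
    (f := fun s => (max (c + amin * (s - t0)) 0) ^ 2 / (2 * amin))
    (fun s _ => hF s) (hcont.intervalIntegrable t0 t)
  rw [this]
  rw [sub_self, mul_zero, add_zero, div_sub_div_same]


lemma braking_key (A B S x y : ℝ) (hA : 0 ≤ A) (hB : 0 ≤ B) (hS : S ≤ 0) (hAB : A ≤ B)
    (hx : x = max (A + S) 0) (hy : y = max (B + S) 0) :
    0 ≤ x ^ 2 - A ^ 2 - (y ^ 2 - B ^ 2) := by
  rcases le_total (A + S) 0 with hA' | hA' <;> rcases le_total (B + S) 0 with hB' | hB'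
  · rw [max_eq_right hA'] at hx; rw [max_eq_right hB'] at hy; subst hx; subst hy
    nlinarith
  · rw [max_eq_right hA'] at hx; rw [max_eq_left hB'] at hy; subst hx; subst hy
    nlinarith [mul_nonneg (by linarith : (0:ℝ) ≤ -(A + S)) (by linarith : (0:ℝ) ≤ 2*B - A + S),
      mul_nonneg hA (by linarith : (0:ℝ) ≤ B - A)]
  · -- A + S ≥ 0 and B + S ≤ 0 forces A = B basically; x = A+S, y = 0
    rw [max_eq_left hA'] at hx; rw [max_eq_right hB'] at hy; subst hx; subst hy
    nlinarith [mul_nonneg hB (by linarith : (0:ℝ) ≤ B - A)]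
  · rw [max_eq_left hA'] at hx; rw [max_eq_left hB'] at hy; subst hx; subst hy
    nlinarith [mul_nonneg (by linarith : (0:ℝ) ≤ -S) (by linarith : (0:ℝ) ≤ B - A)]


/-- recursive feasibility, worst case: if the leader brakes at
`a_min` until reaching `v_min` and then cruises, and the follower does the
same, then the (piecewise) safety function stays nonpositive for all `t ≥ t₀`.
The clipped-speed trajectories are `max (v₀ + a_min (t − t₀)) v_min`, and the
gap evolves as the integral of the relative speed. -/
theorem recursive_feasibility_worst_case
    (δ amin vmin vmax t0 : ℝ)
    (phat0 v0 vL0 : ℝ)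
    (hδ : 0 < δ) (hamin : amin < 0) (hvmin : 0 < vmin) (hvv : vmin ≤ vmax)
    (hv0 : v0 ∈ Set.Icc vmin vmax) (hvL0 : vL0 ∈ Set.Icc vmin vmax)
    -- follower and leader clipped braking trajectories
    (v vL : ℝ → ℝ)
    (hv : ∀ t, v t = max (v0 + amin * (t - t0)) vmin)
    (hvL : ∀ t, vL t = max (vL0 + amin * (t - t0)) vmin)
    -- gap dynamics
    (phat : ℝ → ℝ)
    (hphat : ∀ t, phat t = phat0 + ∫ s in t0..t, (v s - vL s))
    -- safety function (piecewise in the sign of v̂)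
    (g : ℝ → ℝ → ℝ → ℝ)
    (hg : ∀ p q w, g p q w =
      if 0 < q then
        p + δ + q * (vmin - w) / amin + q ^ 2 / (2 * amin)
      else p + δ)
    -- initial feasibility
    (hinit : g phat0 (v0 - vL0) v0 ≤ 0) :
    ∀ t ≥ t0, g (phat t) (v t - vL t) (v t) ≤ 0 := by
  intro t ht
  have hane : amin ≠ 0 := ne_of_lt hamin
  have ha : 0 ≤ v0 - vmin := by linarith [hv0.1]
  have haL : 0 ≤ vL0 - vmin := by linarith [hvL0.1]
  have hu0 : 0 ≤ t - t0 := by linarith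
  have hs0 : amin * (t - t0) ≤ 0 := mul_nonpos_of_nonpos_of_nonneg hamin.le hu0
  obtain ⟨x, hxdef⟩ : ∃ x : ℝ, x = max (v0 - vmin + amin * (t - t0)) 0 := ⟨_, rfl⟩
  obtain ⟨y, hydef⟩ : ∃ y : ℝ, y = max (vL0 - vmin + amin * (t - t0)) 0 := ⟨_, rfl⟩
  have hx0 : (0:ℝ) ≤ x := hxdef ▸ le_max_right _ _
  have hy0 : (0:ℝ) ≤ y := hydef ▸ le_max_right _ _
  have hxge : v0 - vmin + amin * (t - t0) ≤ x := hxdef ▸ le_max_left _ _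
  have hyge : vL0 - vmin + amin * (t - t0) ≤ y := hydef ▸ le_max_left _ _
  have hxc : x = v0 - vmin + amin * (t - t0) ∨ x = 0 := by
    rcases max_choice (v0 - vmin + amin * (t - t0)) 0 with h | h
    · exact Or.inl (hxdef.trans h)
    · exact Or.inr (hxdef.trans h)
  have hyc : y = vL0 - vmin + amin * (t - t0) ∨ y = 0 := by
    rcases max_choice (vL0 - vmin + amin * (t - t0)) 0 with h | h
    · exact Or.inl (hydef.trans h)
    · exact Or.inr (hydef.trans h)
  -- trajectory values
  have hvt : v t = vmin + x := by
    rw [hv, hxdef]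
    rcases le_total (v0 + amin * (t - t0)) vmin with h | h
    · rw [max_eq_right h, max_eq_right (by linarith : v0 - vmin + amin * (t - t0) ≤ 0)]; ring
    · rw [max_eq_left h, max_eq_left (by linarith : (0:ℝ) ≤ v0 - vmin + amin * (t - t0))]; ring
  have hvLt : vL t = vmin + y := by
    rw [hvL, hydef]
    rcases le_total (vL0 + amin * (t - t0)) vmin with h | h
    · rw [max_eq_right h, max_eq_right (by linarith : vL0 - vmin + amin * (t - t0) ≤ 0)]; ring
    · rw [max_eq_left h, max_eq_left (by linarith : (0:ℝ) ≤ vL0 - vmin + amin * (t - t0))]; ring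
  -- gap formula
  have hph : phat t = phat0 +
      ((x ^ 2 - (v0 - vmin) ^ 2) - (y ^ 2 - (vL0 - vmin) ^ 2)) / (2 * amin) := by
    rw [hphat]
    have e1 : ∀ s : ℝ, v s - vL s =
        max (v0 - vmin + amin * (s - t0)) 0 - max (vL0 - vmin + amin * (s - t0)) 0 := by
      intro s
      rw [hv, hvL]
      rcases le_total (v0 + amin * (s - t0)) vmin with h | h <;>
        rcases le_total (vL0 + amin * (s - t0)) vmin with h' | h'
      · rw [max_eq_right h, max_eq_right h',
          max_eq_right (by linarith : v0 - vmin + amin * (s - t0) ≤ 0),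
          max_eq_right (by linarith : vL0 - vmin + amin * (s - t0) ≤ 0)]; ring
      · rw [max_eq_right h, max_eq_left h',
          max_eq_right (by linarith : v0 - vmin + amin * (s - t0) ≤ 0),
          max_eq_left (by linarith : (0:ℝ) ≤ vL0 - vmin + amin * (s - t0))]; ring
      · rw [max_eq_left h, max_eq_right h',
          max_eq_left (by linarith : (0:ℝ) ≤ v0 - vmin + amin * (s - t0)),
          max_eq_right (by linarith : vL0 - vmin + amin * (s - t0) ≤ 0)]; ring
      · rw [max_eq_left h, max_eq_left h',
          max_eq_left (by linarith : (0:ℝ) ≤ v0 - vmin + amin * (s - t0)),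
          max_eq_left (by linarith : (0:ℝ) ≤ vL0 - vmin + amin * (s - t0))]; ring
    have hcont : ∀ c : ℝ, Continuous fun s : ℝ => max (c + amin * (s - t0)) 0 := fun c =>
      (continuous_const.add (continuous_const.mul (continuous_id.sub continuous_const))).max
        continuous_const
    have e2 : (∫ s in t0..t, (v s - vL s)) =
        (∫ s in t0..t, max (v0 - vmin + amin * (s - t0)) 0) -
          ∫ s in t0..t, max (vL0 - vmin + amin * (s - t0)) 0 := by
      rw [← intervalIntegral.integral_sub ((hcont (v0 - vmin)).intervalIntegrable t0 t)
        ((hcont (vL0 - vmin)).intervalIntegrable t0 t)]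
      exact intervalIntegral.integral_congr fun s _ => e1 s
    rw [e2, integral_max_linear (v0 - vmin) amin t0 t hane,
      integral_max_linear (vL0 - vmin) amin t0 t hane,
      max_eq_left ha, max_eq_left haL, div_sub_div_same, ← hxdef, ← hydef]
  -- the algebra
  rw [hg] at hinit ⊢
  rw [hvt, hvLt, hph]
  have hsub : vmin + x - (vmin + y) = x - y := by ring
  rw [hsub]
  split_ifs with h1
  · -- 0 < x - y : the safety function is constant along braking
    have hxpos : 0 < x := by linarith
    have hxe : x = v0 - vmin + amin * (t - t0) := by
      rcases hxc with h | h
      · exact h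
      · linarith
    have h2 : 0 < v0 - vL0 := by linarith
    rw [if_pos h2] at hinit
    calc phat0 + (x ^ 2 - (v0 - vmin) ^ 2 - (y ^ 2 - (vL0 - vmin) ^ 2)) / (2 * amin) + δ +
          (x - y) * (vmin - (vmin + x)) / amin + (x - y) ^ 2 / (2 * amin)
        = phat0 + δ + (v0 - vL0) * (vmin - v0) / amin + (v0 - vL0) ^ 2 / (2 * amin) := by
          field_simp
          ring
      _ ≤ 0 := hinit
  · -- x ≤ y
    push_neg at h1
    have hxy : x ≤ y := by linarith
    by_cases h2 : 0 < v0 - vL0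
    · have hyx : y ≤ x := by
        rw [hxdef, hydef]
        exact max_le_max (by linarith) le_rfl
      have hxyeq : x = y := le_antisymm hxy hyx
      rw [if_pos h2] at hinit
      calc phat0 + (x ^ 2 - (v0 - vmin) ^ 2 - (y ^ 2 - (vL0 - vmin) ^ 2)) / (2 * amin) + δ
          = phat0 + δ + (v0 - vL0) * (vmin - v0) / amin + (v0 - vL0) ^ 2 / (2 * amin) := by
            rw [hxyeq]
            field_simp
            ring
        _ ≤ 0 := hinit
    · rw [if_neg h2] at hinit
      push_neg at h2
      have key : 0 ≤ x ^ 2 - (v0 - vmin) ^ 2 - (y ^ 2 - (vL0 - vmin) ^ 2) :=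
        braking_key (v0 - vmin) (vL0 - vmin) (amin * (t - t0)) x y ha haL hs0
          (by linarith) hxdef hydef
      have hdiv : (x ^ 2 - (v0 - vmin) ^ 2 - (y ^ 2 - (vL0 - vmin) ^ 2)) / (2 * amin) ≤ 0 :=
        div_nonpos_of_nonneg_of_nonpos key (by linarith)
      linarith
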